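/- Let K ⊆ L⁰₊ be convex, closed in probability, and bounded in probability. Then its solid hull S := { f ∈ L⁰₊ : 0 ≤ f ≤ h a.s. for some h ∈ K } is convex, bounded in probability, and closed in probability. -/

import Mathlib

open MeasureTheory Filter Set

noncomputable section

variable {Ω : Type*} [MeasurableSpace Ω]

/-- The nonnegative orthant `L⁰₊` of `L⁰`: (a.e. classes of) random variables that are
a.e. nonnegative.  We work with representatives, requiring a.e.-measurability. -/
def L0plus (P : Measure Ω) : Set (Ω → ℝ) :=
  {f | AEMeasurable f P ∧ 0 ≤ᵐ[P] f}

/-- A set `A ⊆ L⁰₊` is bounded (in probability) if `lim_{ℓ→∞} sup_{f∈A} P[f>ℓ] = 0`. -/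
def BoundedInProb (P : Measure Ω) (A : Set (Ω → ℝ)) : Prop :=
  Tendsto (fun ℓ : ℝ => ⨆ f ∈ A, P {ω | ℓ < f ω}) atTop (nhds 0)

/-- A set `K` is closed in probability: it contains every (a.e.-measurable) limit in
measure of sequences from `K`.  (Convergence in probability is metrizable, so sequential
closedness is closedness.) -/
def ClosedInProb (P : Measure Ω) (K : Set (Ω → ℝ)) : Prop :=
  ∀ (f : ℕ → Ω → ℝ) (g : Ω → ℝ), (∀ n, f n ∈ K) → AEMeasurable g P →
    TendstoInMeasure P f atTop g → g ∈ K

/-- `g` is strictly positive on `C`: `P[f > 0, g = 0] = 0` for every `f ∈ C`. -/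
def StrictlyPositiveOn (P : Measure Ω) (C : Set (Ω → ℝ)) (g : Ω → ℝ) : Prop :=
  ∀ f ∈ C, P ({ω | 0 < f ω} ∩ {ω | g ω = 0}) = 0

/-- `Q` is a probability measure equivalent to `P`. -/
def EquivProb (P Q : Measure Ω) : Prop :=
  IsProbabilityMeasure Q ∧ Q ≪ P ∧ P ≪ Q

/-- `g` is a numéraire of `C`: it is strictly positive on `C` and there is an equivalent
probability `Q` with `E_Q[(f/g)·1_{g>0}] ≤ Q[g>0]` for all `f ∈ C`. -/
def IsNumeraire (P : Measure Ω) (C : Set (Ω → ℝ)) (g : Ω → ℝ) : Prop :=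
  StrictlyPositiveOn P C g ∧
    ∃ Q : Measure Ω, EquivProb P Q ∧
      ∀ f ∈ C, (∫⁻ ω in {ω | 0 < g ω}, ENNReal.ofReal (f ω / g ω) ∂Q) ≤ Q {ω | 0 < g ω}

/-- The class `CS_g(C)` of subsets `K` of `L⁰₊` with (CS1) `C ⊆ K`, (CS2) `K` convex and
closed in probability, (CS3) `f ∈ K`, `δ ≥ 0`, `(1+δ)f − δg ∈ L⁰₊` imply `(1+δ)f − δg ∈ K`. -/
def CSclass (P : Measure Ω) (C : Set (Ω → ℝ)) (g : Ω → ℝ) : Set (Set (Ω → ℝ)) :=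
  {K | K ⊆ L0plus P ∧ C ⊆ K ∧ Convex ℝ K ∧ ClosedInProb P K ∧
    ∀ f ∈ K, ∀ δ : ℝ, 0 ≤ δ →
      (fun ω => (1 + δ) * f ω - δ * g ω) ∈ L0plus P →
      (fun ω => (1 + δ) * f ω - δ * g ω) ∈ K}

/-- `cs_g(C)`, the smallest element of `CS_g(C)`. -/
def csSet (P : Measure Ω) (C : Set (Ω → ℝ)) (g : Ω → ℝ) : Set (Ω → ℝ) :=
  ⋂ K ∈ CSclass P C g, K

/-- The solid hull of `K` in `L⁰₊`. -/
def SolidHull (P : Measure Ω) (K : Set (Ω → ℝ)) : Set (Ω → ℝ) :=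
  {f | f ∈ L0plus P ∧ ∃ h ∈ K, f ≤ᵐ[P] h}

/-- `L∞`: essentially bounded (a.e.-measurable) random variables. -/
def Linf (P : Measure Ω) : Set (Ω → ℝ) :=
  {f | AEMeasurable f P ∧ ∃ c : ℝ, ∀ᵐ ω ∂P, |f ω| ≤ c}

/-- `L∞₊ = L⁰₊ ∩ L∞`. -/
def LinfPlus (P : Measure Ω) : Set (Ω → ℝ) := L0plus P ∩ Linf P

/-- `L` is solid: `0 ≤ u ≤ h` a.s. with `h ∈ L` implies `u ∈ L`. -/
def IsSolid (P : Measure Ω) (L : Set (Ω → ℝ)) : Prop :=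
  ∀ u : Ω → ℝ, AEMeasurable u P → 0 ≤ᵐ[P] u → (∃ h ∈ L, u ≤ᵐ[P] h) → u ∈ L

/-- `A_α := α (L − 1) = { α(f − 1) : f ∈ L }`. -/
def Aset (L : Set (Ω → ℝ)) (α : ℝ) : Set (Ω → ℝ) :=
  (fun f : Ω → ℝ => fun ω => α * (f ω - 1)) '' L

/-- `J := ⋃_{α ≥ 0} A_α`. -/
def Jset (L : Set (Ω → ℝ)) : Set (Ω → ℝ) := ⋃ α ∈ Ici (0 : ℝ), Aset L α

/-- The weak* topology on (representatives of) `L∞`, viewed as the dual of `L¹(P)`: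
the topology induced by the maps `φ ↦ ∫ φ·u dP` for integrable `u`. -/
def weakStarTop (P : Measure Ω) : TopologicalSpace (Ω → ℝ) :=
  ⨅ (u : Ω → ℝ) (_ : Integrable u P),
    TopologicalSpace.induced (fun φ : Ω → ℝ => ∫ ω, φ ω * u ω ∂P) inferInstance

/-- The witness set `K := { h ∈ L⁰₊ : P[h>0, g=0]=0 and E_Q[(h/g)·1_{g>0}] ≤ Q[g>0] }`. -/
def Kwitness (P Q : Measure Ω) (g : Ω → ℝ) : Set (Ω → ℝ) :=
  {h | h ∈ L0plus P ∧ P ({ω | 0 < h ω} ∩ {ω | g ω = 0}) = 0 ∧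
    (∫⁻ ω in {ω | 0 < g ω}, ENNReal.ofReal (h ω / g ω) ∂Q) ≤ Q {ω | 0 < g ω}}

/-- The set `C` of the example: outcomes `1 − θ₁ + (θ₁ + θ₂)ξ` for `θ` in the constraint
set `Θ = { θ ∈ ℝ₊² : θ₂ ≤ √θ₁ ≤ 1 }`. -/
def exampleC (ξ : Ω → ℝ) : Set (Ω → ℝ) :=
  {f | ∃ θ : ℝ × ℝ, (0 ≤ θ.1 ∧ 0 ≤ θ.2 ∧ θ.2 ≤ Real.sqrt θ.1 ∧ Real.sqrt θ.1 ≤ 1) ∧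
    f = fun ω => 1 - θ.1 + (θ.1 + θ.2) * ξ ω}

open scoped ENNReal

noncomputable def uu (x : ℝ) : ℝ := 1 - Real.exp (-x)

lemma uu_nonneg {x : ℝ} (hx : 0 ≤ x) : 0 ≤ uu x := by
  have : Real.exp (-x) ≤ 1 := Real.exp_le_one_iff.mpr (by linarith)
  simp [uu]; linarith

lemma uu_le_one (x : ℝ) : uu x ≤ 1 := by
  have := Real.exp_pos (-x); simp [uu]; linarith

lemma abs_uu_le {x : ℝ} (hx : 0 ≤ x) : |uu x| ≤ 1 := by
  rw [abs_le]; exact ⟨by linarith [uu_nonneg hx], uu_le_one x⟩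

lemma exp_half_sq (x : ℝ) : Real.exp (-(x/2)) * Real.exp (-(x/2)) = Real.exp (-x) := by
  rw [← Real.exp_add]; ring_nf

lemma uu_mid_sub (x y : ℝ) :
    uu ((x+y)/2) - (uu x + uu y)/2
      = (Real.exp (-(x/2)) - Real.exp (-(y/2)))^2 / 2 := by
  have hx := exp_half_sq x
  have hy := exp_half_sq y
  have hxy : Real.exp (-((x+y)/2)) = Real.exp (-(x/2)) * Real.exp (-(y/2)) := by
    rw [← Real.exp_add]; ring_nf
  simp only [uu]
  nlinarith [hx, hy, hxy]

lemma uu_concave2 (x y : ℝ) : (uu x + uu y)/2 ≤ uu ((x+y)/2) := by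
  have := uu_mid_sub x y
  nlinarith [sq_nonneg (Real.exp (-(x/2)) - Real.exp (-(y/2)))]

lemma uu_gain {ε M x y : ℝ} (hε : 0 < ε) (hxM : x ≤ M) (hyM : y ≤ M)
    (hxy : ε ≤ |x - y|) :
    (uu x + uu y)/2 + (Real.exp (-(M/2)) * (1 - Real.exp (-(ε/2))))^2/2 ≤ uu ((x+y)/2) := by
  have hmid := uu_mid_sub x y
  set a := Real.exp (-(x/2)) with ha
  set b := Real.exp (-(y/2)) with hb
  set c := Real.exp (-(M/2)) with hc
  set d := Real.exp (-(ε/2)) with hd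
  have hd1 : d ≤ 1 := Real.exp_le_one_iff.mpr (by linarith)
  have hcpos : 0 < c := Real.exp_pos _
  have hkey : (c * (1 - d))^2 ≤ (a - b)^2 := by
    rcases le_total x y with h | h
    · have hεxy : x + ε ≤ y := by rw [abs_sub_comm, abs_of_nonneg (by linarith)] at hxy; linarith
      have hba : b ≤ a * d := by
        rw [ha, hd, ← Real.exp_add]
        exact Real.exp_le_exp.mpr (by linarith)
      have hca : c ≤ a := Real.exp_le_exp.mpr (by linarith)
      have h1 : c * (1 - d) ≤ a - b := by nlinarith
      have h2 : 0 ≤ c * (1 - d) := by nlinarith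
      nlinarith
    · have hεxy : y + ε ≤ x := by rw [abs_of_nonneg (by linarith)] at hxy; linarith
      have hba : a ≤ b * d := by
        rw [hb, hd, ← Real.exp_add]
        exact Real.exp_le_exp.mpr (by linarith)
      have hcb : c ≤ b := Real.exp_le_exp.mpr (by linarith)
      have h1 : c * (1 - d) ≤ b - a := by nlinarith
      have h2 : 0 ≤ c * (1 - d) := by nlinarith
      nlinarith
  linarith [hmid, hkey]

lemma integrable_uu (P : Measure Ω) [IsProbabilityMeasure P] {v : Ω → Ω → ℝ} : True := trivial

lemma uu_int (P : Measure Ω) [IsProbabilityMeasure P] {v : Ω → ℝ}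
    (hv : AEMeasurable v P) (hv0 : 0 ≤ᵐ[P] v) :
    Integrable (fun ω => uu (v ω)) P := by
  refine Integrable.mono' (integrable_const 1) ?_ ?_
  · have hc : Continuous uu := by unfold uu; continuity
    exact (hc.measurable.comp_aemeasurable hv).aestronglyMeasurable
  · filter_upwards [hv0] with ω hω
    simpa [Real.norm_eq_abs] using abs_uu_le hω

/-- DS Lemma A1.1, Cauchy part. -/
lemma exists_cauchy_convex (P : Measure Ω) [IsProbabilityMeasure P]
    {K : Set (Ω → ℝ)} (hK : K ⊆ L0plus P) (hconv : Convex ℝ K)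
    (hbdd : BoundedInProb P K) (hh : ℕ → Ω → ℝ) (hmem : ∀ n, hh n ∈ K) :
    ∃ k : ℕ → Ω → ℝ, (∀ n, k n ∈ convexHull ℝ (hh '' Ici n)) ∧
      ∀ ε > (0:ℝ), ∃ N, ∀ m ≥ N, ∀ l ≥ N,
        P {ω | ε ≤ |k m ω - k l ω|} < ENNReal.ofReal ε := by
  classical
  set T : ℕ → Set (Ω → ℝ) := fun n => convexHull ℝ (hh '' Ici n) with hT
  have hTK : ∀ n, T n ⊆ K := by
    intro n
    refine convexHull_min ?_ hconv
    rintro x ⟨j, -, rfl⟩; exact hmem j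
  have hTne : ∀ n, (T n).Nonempty :=
    fun n => ⟨hh n, subset_convexHull _ _ (mem_image_of_mem _ (self_mem_Ici))⟩
  have hTanti : ∀ {m n : ℕ}, m ≤ n → T n ⊆ T m :=
    fun {m n} h => convexHull_mono (image_mono (Ici_subset_Ici.mpr h))
  set U : (Ω → ℝ) → ℝ := fun v => ∫ ω, uu (v ω) ∂P with hU
  have hint : ∀ v ∈ K, Integrable (fun ω => uu (v ω)) P := by
    intro v hv; exact uu_int P (hK hv).1 (hK hv).2
  have hU1 : ∀ v ∈ K, U v ≤ 1 := by
    intro v hv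
    calc U v ≤ ∫ _, (1:ℝ) ∂P :=
          integral_mono_ae (hint v hv) (integrable_const 1) (ae_of_all _ fun ω => uu_le_one _)
      _ = 1 := by simp
  have hU0 : ∀ v ∈ K, 0 ≤ U v := by
    intro v hv
    refine integral_nonneg_of_ae ?_
    filter_upwards [(hK hv).2] with ω hω using uu_nonneg hω
  have hbdda : ∀ n, BddAbove (U '' T n) := by
    intro n
    exact ⟨1, by rintro x ⟨v, hv, rfl⟩; exact hU1 v (hTK n hv)⟩
  set a : ℕ → ℝ := fun n => sSup (U '' T n) with haDef
  have ha_anti : Antitone a := by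
    intro m n h
    exact csSup_le_csSup (hbdda m) ((hTne n).image U) (image_mono (hTanti h))
  have ha0 : ∀ n, 0 ≤ a n := by
    intro n
    obtain ⟨v, hv⟩ := hTne n
    exact le_trans (hU0 v (hTK n hv)) (le_csSup (hbdda n) (mem_image_of_mem U hv))
  -- select k n
  have hsel : ∀ n : ℕ, ∃ v, v ∈ T n ∧ a n - 1/((n:ℝ)+1) < U v := by
    intro n
    have h1 : a n - 1/((n:ℝ)+1) < a n := by
      have : (0:ℝ) < 1/((n:ℝ)+1) := by positivity
      linarith
    obtain ⟨x, ⟨v, hv, rfl⟩, hx⟩ := exists_lt_of_lt_csSup ((hTne n).image U) h1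
    exact ⟨v, hv, hx⟩
  choose k hkT hkU using hsel
  have hkK : ∀ n, k n ∈ K := fun n => hTK n (hkT n)
  set aInf : ℝ := ⨅ n, a n with haInf
  have hbb : BddBelow (Set.range a) := ⟨0, by rintro x ⟨n, rfl⟩; exact ha0 n⟩
  have haInfle : ∀ n, aInf ≤ a n := fun n => ciInf_le hbb n
  refine ⟨k, hkT, ?_⟩
  intro ε hε
  -- boundedness: pick M
  obtain ⟨M, hM⟩ := (hbdd.eventually (gt_mem_nhds
      (show (0:ℝ≥0∞) < ENNReal.ofReal (ε/4) from ENNReal.ofReal_pos.mpr (by positivity)))).exists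
  set δ : ℝ := (Real.exp (-(M/2)) * (1 - Real.exp (-(ε/2))))^2/2 with hδDef
  have hδ : 0 < δ := by
    have h1 : Real.exp (-(ε/2)) < 1 := Real.exp_lt_one_iff.mpr (by linarith)
    have h2 : 0 < Real.exp (-(M/2)) := Real.exp_pos _
    have h3 : 0 < Real.exp (-(M/2)) * (1 - Real.exp (-(ε/2))) := mul_pos h2 (by linarith)
    rw [hδDef]; positivity
  obtain ⟨n₀, hn₀⟩ : ∃ n₀, a n₀ < aInf + δ*ε/8 := by
    refine exists_lt_of_ciInf_lt ?_
    rw [← haInf]; nlinarith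
  obtain ⟨n₁, hn₁⟩ : ∃ n₁ : ℕ, 1/((n₁:ℝ)+1) < δ*ε/8 := by
    obtain ⟨n₁, hn₁⟩ := exists_nat_one_div_lt (show (0:ℝ) < δ*ε/8 by nlinarith)
    exact ⟨n₁, hn₁⟩
  refine ⟨max n₀ n₁, ?_⟩
  intro m hm l hl
  by_contra hcon
  push_neg at hcon
  -- tail bounds
  have htail : ∀ n, P {ω | M < k n ω} ≤ ENNReal.ofReal (ε/4) := by
    intro n
    refine le_of_lt (lt_of_le_of_lt ?_ hM)
    exact le_iSup₂ (f := fun f (_ : f ∈ K) => P {ω | M < f ω}) (k n) (hkK n)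
  set A : Set Ω := {ω | ε ≤ |k m ω - k l ω|} with hA
  set E : Set Ω := A ∩ {ω | k m ω ≤ M} ∩ {ω | k l ω ≤ M} with hE
  have hsub : A ⊆ E ∪ {ω | M < k m ω} ∪ {ω | M < k l ω} := by
    intro ω hω
    by_cases h1 : k m ω ≤ M
    · by_cases h2 : k l ω ≤ M
      · exact Or.inl (Or.inl ⟨⟨hω, h1⟩, h2⟩)
      · exact Or.inr (lt_of_not_ge h2)
    · exact Or.inl (Or.inr (lt_of_not_ge h1))
  have hPE : ENNReal.ofReal (ε/2) ≤ P E := by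
    have h1 : ENNReal.ofReal ε ≤ P E + (ENNReal.ofReal (ε/4) + ENNReal.ofReal (ε/4)) := by
      calc ENNReal.ofReal ε ≤ P A := hcon
        _ ≤ P (E ∪ {ω | M < k m ω}) + P {ω | M < k l ω} :=
            le_trans (measure_mono hsub) (measure_union_le _ _)
        _ ≤ P E + P {ω | M < k m ω} + P {ω | M < k l ω} := by
            gcongr; exact measure_union_le _ _
        _ ≤ P E + (ENNReal.ofReal (ε/4) + ENNReal.ofReal (ε/4)) := by
            rw [add_assoc]; gcongr <;> exact htail _
    have h2 : ENNReal.ofReal ε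
        = ENNReal.ofReal (ε/2) + (ENNReal.ofReal (ε/4) + ENNReal.ofReal (ε/4)) := by
      rw [← ENNReal.ofReal_add (by positivity) (by positivity),
        ← ENNReal.ofReal_add (by positivity) (by positivity)]
      congr 1; ring
    rw [h2] at h1
    exact (ENNReal.add_le_add_iff_right (by finiteness)).mp h1
  have hkm := (hK (hkK m)).1
  have hkl := (hK (hkK l)).1
  have hEnull : NullMeasurableSet E P := by
    have h1 : NullMeasurableSet A P := by
      have hA2 : A = (fun ω => |k m ω - k l ω|) ⁻¹' Ici ε := rfl
      rw [hA2]
      exact (measurable_abs.comp_aemeasurable (hkm.sub hkl)).nullMeasurable measurableSet_Ici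
    have h2 : NullMeasurableSet {ω | k m ω ≤ M} P := hkm.nullMeasurable measurableSet_Iic
    have h3 : NullMeasurableSet {ω | k l ω ≤ M} P := hkl.nullMeasurable measurableSet_Iic
    exact (h1.inter h2).inter h3
  set mid : Ω → ℝ := fun ω => (k m ω + k l ω)/2 with hmidDef
  have hmidT : mid ∈ T (max n₀ n₁) := by
    have h1 : mid = (1/2 : ℝ) • k m + (1/2 : ℝ) • k l := by
      funext ω; simp only [hmidDef, Pi.add_apply, Pi.smul_apply, smul_eq_mul]; ring
    rw [h1]
    exact (convex_convexHull ℝ _) (hTanti hm (hkT m)) (hTanti hl (hkT l))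
      (by norm_num) (by norm_num) (by norm_num)
  have hmidK : mid ∈ K := hTK _ hmidT
  set w : Ω → ℝ := fun ω => uu (mid ω) - (uu (k m ω) + uu (k l ω))/2 with hwDef
  have hw_int : Integrable w P :=
    (hint mid hmidK).sub (((hint _ (hkK m)).add (hint _ (hkK l))).div_const 2)
  have hw0 : 0 ≤ᵐ[P] w := ae_of_all _ fun ω => sub_nonneg.mpr (uu_concave2 _ _)
  have hwE : ∀ ω ∈ E, δ ≤ w ω := by
    rintro ω ⟨⟨hωA, hω1⟩, hω2⟩
    have hg := uu_gain hε hω1 hω2 hωA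
    show δ ≤ uu ((k m ω + k l ω)/2) - (uu (k m ω) + uu (k l ω))/2
    rw [hδDef]; linarith
  have hintw : δ * (P E).toReal ≤ ∫ ω, w ω ∂P := by
    calc δ * (P E).toReal = ∫ _ in E, δ ∂P := by
          rw [setIntegral_const, smul_eq_mul, mul_comm]; rfl
      _ ≤ ∫ ω in E, w ω ∂P := integral_mono_ae (integrable_const δ) hw_int.restrict
          ((ae_restrict_iff'₀ hEnull).mpr (ae_of_all _ hwE))
      _ ≤ ∫ ω, w ω ∂P := setIntegral_le_integral hw_int hw0
  have hPEr : ε/2 ≤ (P E).toReal := by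
    have h := ENNReal.toReal_mono (measure_ne_top P E) hPE
    rwa [ENNReal.toReal_ofReal (by positivity)] at h
  have hsplit : ∫ ω, w ω ∂P = U mid - (U (k m) + U (k l))/2 := by
    have e1 : ∫ ω, w ω ∂P
        = (∫ ω, uu (mid ω) ∂P) - ∫ ω, (uu (k m ω) + uu (k l ω))/2 ∂P :=
      integral_sub (hint mid hmidK) (((hint _ (hkK m)).add (hint _ (hkK l))).div_const 2)
    have e2 : ∫ ω, (uu (k m ω) + uu (k l ω))/2 ∂P
        = ((∫ ω, uu (k m ω) ∂P) + ∫ ω, uu (k l ω) ∂P)/2 := by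
      rw [integral_div, integral_add (hint _ (hkK m)) (hint _ (hkK l))]
    rw [e1, e2]
  have hUmid : U mid ≤ a (max n₀ n₁) := le_csSup (hbdda _) (mem_image_of_mem U hmidT)
  have haN : a (max n₀ n₁) < aInf + δ*ε/8 := lt_of_le_of_lt (ha_anti (le_max_left _ _)) hn₀
  have honed : ∀ j : ℕ, j ≥ max n₀ n₁ → 1/((j:ℝ)+1) < δ*ε/8 := by
    intro j hj
    refine lt_of_le_of_lt ?_ hn₁
    apply one_div_le_one_div_of_le (by positivity)
    have : (n₁ : ℝ) ≤ (j : ℝ) := by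
      exact_mod_cast le_trans (le_max_right n₀ n₁) hj
    linarith
  have hUm : aInf - δ*ε/8 ≤ U (k m) := by
    have h1 := hkU m
    have h2 := honed m hm
    have h3 := haInfle m
    linarith
  have hUl : aInf - δ*ε/8 ≤ U (k l) := by
    have h1 := hkU l
    have h2 := honed l hl
    have h3 := haInfle l
    linarith
  have hprod : δ * (ε/2) ≤ δ * (P E).toReal := mul_le_mul_of_nonneg_left hPEr hδ.le
  nlinarith [hUmid, haN, hUm, hUl, hintw, hsplit, hprod, hδ, hε]

/-- DS Lemma A1.1: convex-combination subsequence converging a.e. and in measure. -/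
lemma komlos (P : Measure Ω) [IsProbabilityMeasure P]
    {K : Set (Ω → ℝ)} (hK : K ⊆ L0plus P) (hconv : Convex ℝ K)
    (hbdd : BoundedInProb P K) (hh : ℕ → Ω → ℝ) (hmem : ∀ n, hh n ∈ K) :
    ∃ (k : ℕ → Ω → ℝ) (h : Ω → ℝ),
      (∀ j, k j ∈ convexHull ℝ (hh '' Ici j)) ∧ (∀ j, k j ∈ K) ∧
      AEMeasurable h P ∧ (∀ᵐ ω ∂P, Tendsto (fun j => k j ω) atTop (nhds (h ω))) ∧
      TendstoInMeasure P k atTop h := by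
  classical
  obtain ⟨k0, hk0T, hk0C⟩ := exists_cauchy_convex P hK hconv hbdd hh hmem
  have hk0K : ∀ n, k0 n ∈ K := by
    intro n
    refine convexHull_min ?_ hconv (hk0T n)
    rintro x ⟨j, -, rfl⟩; exact hmem j
  have hsel : ∀ j : ℕ, ∃ N, ∀ m ≥ N, ∀ l ≥ N,
      P {ω | (1/2:ℝ)^j ≤ |k0 m ω - k0 l ω|} < ENNReal.ofReal ((1/2:ℝ)^j) :=
    fun j => hk0C ((1/2:ℝ)^j) (by positivity)
  choose N hN using hsel
  -- build indices
  let n : ℕ → ℕ := fun j => Nat.rec (N 0) (fun j nj => max (nj + 1) (N (j+1))) j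
  have hn_succ : ∀ j, n (j+1) = max (n j + 1) (N (j+1)) := fun j => rfl
  have hn_lt : ∀ j, n j < n (j+1) := by
    intro j; rw [hn_succ]; exact lt_of_lt_of_le (Nat.lt_succ_self _) (le_max_left _ _)
  have hn_mono : StrictMono n := strictMono_nat_of_lt_succ hn_lt
  have hn_ge : ∀ j, N j ≤ n j := by
    intro j
    cases j with
    | zero => exact le_refl _
    | succ i => rw [hn_succ]; exact le_max_right _ _
  have hn_ge_self : ∀ j, j ≤ n j := fun j => hn_mono.le_apply
  set A : ℕ → Set Ω := fun j => {ω | (1/2:ℝ)^j ≤ |k0 (n (j+1)) ω - k0 (n j) ω|} with hA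
  have hPA : ∀ j, P (A j) < ENNReal.ofReal ((1/2:ℝ)^j) := by
    intro j
    exact hN j (n (j+1)) (le_trans (hn_ge j) (hn_lt j).le) (n j) (hn_ge j)
  have htsum : ∑' j, P (A j) ≠ ∞ := by
    have hle : ∑' j, P (A j) ≤ ∑' j, ENNReal.ofReal ((1/2:ℝ)^j) :=
      ENNReal.tsum_le_tsum fun j => (hPA j).le
    have hsum : Summable (fun j : ℕ => (1/2:ℝ)^j) :=
      summable_geometric_of_lt_one (by norm_num) (by norm_num)
    have : ∑' j, ENNReal.ofReal ((1/2:ℝ)^j) ≠ ∞ := by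
      rw [← ENNReal.ofReal_tsum_of_nonneg (fun j => by positivity) hsum]
      exact ENNReal.ofReal_ne_top
    exact fun hc => this (top_le_iff.mp (hc ▸ hle))
  have hlimsup := measure_limsup_atTop_eq_zero (μ := P) (s := A) htsum
  have hae_ev : ∀ᵐ ω ∂P, ∀ᶠ j in atTop, |k0 (n (j+1)) ω - k0 (n j) ω| < (1/2:ℝ)^j := by
    have : ∀ᵐ ω ∂P, ω ∉ limsup A atTop := by
      rw [ae_iff]; simpa using hlimsup
    filter_upwards [this] with ω hω
    rw [mem_limsup_iff_frequently_mem, not_frequently] at hω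
    filter_upwards [hω] with j hj
    exact lt_of_not_ge hj
  have hae_cauchy : ∀ᵐ ω ∂P, ∃ L, Tendsto (fun j => k0 (n j) ω) atTop (nhds L) := by
    filter_upwards [hae_ev] with ω hω
    obtain ⟨J, hJ⟩ := eventually_atTop.mp hω
    apply cauchySeq_tendsto_of_complete
    refine cauchySeq_of_dist_le_of_summable (fun j => dist (k0 (n j) ω) (k0 (n (j+1)) ω))
      (fun _ => le_refl _) ?_
    rw [← summable_nat_add_iff J]
    refine Summable.of_nonneg_of_le (fun _ => dist_nonneg) (fun j => ?_)
      (((summable_geometric_of_lt_one (r := (1/2:ℝ)) (by norm_num) (by norm_num))).mul_right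
        ((1/2:ℝ)^J))
    have hb := hJ (j + J) (Nat.le_add_left _ _)
    rw [Real.dist_eq, abs_sub_comm]
    calc |k0 (n (j + J + 1)) ω - k0 (n (j + J)) ω| ≤ (1/2:ℝ)^(j+J) := hb.le
      _ = (1/2:ℝ)^j * (1/2:ℝ)^J := pow_add _ _ _
  set hlim : Ω → ℝ := fun ω =>
    if hc : ∃ L, Tendsto (fun j => k0 (n j) ω) atTop (nhds L) then hc.choose else 0
    with hhlim
  have hae : ∀ᵐ ω ∂P, Tendsto (fun j => k0 (n j) ω) atTop (nhds (hlim ω)) := by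
    filter_upwards [hae_cauchy] with ω hω
    rw [hhlim]; simp only [dif_pos hω]
    exact hω.choose_spec
  have hmeas : AEMeasurable hlim P :=
    aemeasurable_of_tendsto_metrizable_ae atTop (fun j => (hK (hk0K (n j))).1) hae
  refine ⟨fun j => k0 (n j), hlim, ?_, fun j => hk0K (n j), hmeas, hae, ?_⟩
  · intro j
    exact convexHull_mono (image_mono (Ici_subset_Ici.mpr (hn_ge_self j))) (hk0T (n j))
  · exact tendstoInMeasure_of_tendsto_ae
      (fun j => (hK (hk0K (n j))).1.aestronglyMeasurable) hae

/-- the solid hull of a convex, closed, bounded `K ⊆ L⁰₊` is convex,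
bounded and closed in probability. -/
theorem solidHull_convex_bounded_closed
    (P : Measure Ω) [IsProbabilityMeasure P]
    (K : Set (Ω → ℝ)) (hK : K ⊆ L0plus P) (hconv : Convex ℝ K)
    (hclosed : ClosedInProb P K) (hbdd : BoundedInProb P K) :
    Convex ℝ (SolidHull P K) ∧ BoundedInProb P (SolidHull P K) ∧
      ClosedInProb P (SolidHull P K) := by
  classical
  refine ⟨?_, ?_, ?_⟩
  · -- convexity
    rintro x ⟨⟨hxm, hx0⟩, hx, hxK, hxle⟩ y ⟨⟨hym, hy0⟩, hy, hyK, hyle⟩ s t hs ht hst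
    refine ⟨⟨?_, ?_⟩, s • hx + t • hy, hconv hxK hyK hs ht hst, ?_⟩
    · exact ((hxm.const_smul s).add (hym.const_smul t))
    · filter_upwards [hx0, hy0] with ω h1 h2
      have : (s • x + t • y) ω = s * x ω + t * y ω := by
        simp [Pi.add_apply, Pi.smul_apply, smul_eq_mul]
      rw [this]; exact add_nonneg (mul_nonneg hs h1) (mul_nonneg ht h2)
    · filter_upwards [hxle, hyle] with ω h1 h2
      have e1 : (s • x + t • y) ω = s * x ω + t * y ω := by
        simp [Pi.add_apply, Pi.smul_apply, smul_eq_mul]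
      have e2 : (s • hx + t • hy) ω = s * hx ω + t * hy ω := by
        simp [Pi.add_apply, Pi.smul_apply, smul_eq_mul]
      rw [e1, e2]
      gcongr
  · -- bounded
    have hle : ∀ ℓ : ℝ, (⨆ f ∈ SolidHull P K, P {ω | ℓ < f ω})
        ≤ ⨆ f ∈ K, P {ω | ℓ < f ω} := by
      intro ℓ
      refine iSup₂_le ?_
      rintro f ⟨-, h, hhK, hfle⟩
      refine le_trans ?_ (le_iSup₂ (f := fun f (_ : f ∈ K) => P {ω | ℓ < f ω}) h hhK)
      refine measure_mono_ae ?_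
      filter_upwards [hfle] with ω hω h1
      exact lt_of_lt_of_le h1 hω
    refine tendsto_of_tendsto_of_tendsto_of_le_of_le tendsto_const_nhds hbdd
      (fun ℓ => zero_le) hle
  · -- closed
    intro f g hfS hg hTIM
    choose hh hhK hle using fun n => (hfS n).2
    obtain ⟨ns, hns_mono, hns_ae⟩ := hTIM.exists_seq_tendsto_ae
    set f' : ℕ → Ω → ℝ := fun r => f (ns r) with hf'
    set hh' : ℕ → Ω → ℝ := fun r => hh (ns r) with hhh'
    obtain ⟨k, h, hkT, hkK, hmeas, hkae, hkTIM⟩ :=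
      komlos P hK hconv hbdd hh' (fun r => hhK (ns r))
    have hhKmem : h ∈ K := hclosed k h hkK hmeas hkTIM
    have key : ∀ j : ℕ, ∃ φ : Ω → ℝ, (φ ≤ᵐ[P] k j) ∧
        ∀ ω (ε' : ℝ), 0 ≤ ε' → (∀ r ≥ j, |f' r ω - g ω| ≤ ε') → |φ ω - g ω| ≤ ε' := by
      intro j
      have hmem := hkT j
      rw [convexHull_eq] at hmem
      obtain ⟨ι, t, wgt, z, hw0, hw1, hz, hcm⟩ := hmem
      choose! idx hidxIci hidxEq using hz
      refine ⟨fun ω => ∑ i ∈ t, wgt i * f' (idx i) ω, ?_, ?_⟩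
      · have hkj : ∀ ω, k j ω = ∑ i ∈ t, wgt i * z i ω := by
          intro ω
          rw [← hcm, Finset.centerMass_eq_of_sum_1 _ _ hw1]
          simp [Finset.sum_apply, Pi.smul_apply, smul_eq_mul]
        filter_upwards [ae_all_iff.mpr (fun r : ℕ => hle (ns r))] with ω hω
        rw [hkj ω]
        refine Finset.sum_le_sum fun i hi => ?_
        rw [← hidxEq i hi]
        exact mul_le_mul_of_nonneg_left (hω (idx i)) (hw0 i hi)
      · intro ω ε' hε' hr
        have e1 : (∑ i ∈ t, wgt i * f' (idx i) ω) - g ω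
            = ∑ i ∈ t, wgt i * (f' (idx i) ω - g ω) := by
          have e2 : ∑ i ∈ t, wgt i * (f' (idx i) ω - g ω)
              = (∑ i ∈ t, wgt i * f' (idx i) ω) - (∑ i ∈ t, wgt i) * g ω := by
            rw [Finset.sum_mul, ← Finset.sum_sub_distrib]
            exact Finset.sum_congr rfl fun i _ => by ring
          rw [e2, hw1, one_mul]
        calc |(∑ i ∈ t, wgt i * f' (idx i) ω) - g ω|
            = |∑ i ∈ t, wgt i * (f' (idx i) ω - g ω)| := by rw [e1]
          _ ≤ ∑ i ∈ t, |wgt i * (f' (idx i) ω - g ω)| := Finset.abs_sum_le_sum_abs _ _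
          _ ≤ ∑ i ∈ t, wgt i * ε' := by
              refine Finset.sum_le_sum fun i hi => ?_
              rw [abs_mul, abs_of_nonneg (hw0 i hi)]
              exact mul_le_mul_of_nonneg_left (hr (idx i) (hidxIci i hi)) (hw0 i hi)
          _ = ε' := by rw [← Finset.sum_mul, hw1, one_mul]
    choose φ hφ1 hφ2 using key
    have hg0 : 0 ≤ᵐ[P] g := by
      filter_upwards [hns_ae, ae_all_iff.mpr (fun r : ℕ => (hfS (ns r)).1.2)] with ω h1 h2
      exact ge_of_tendsto h1 (Eventually.of_forall fun r => h2 r)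
    have hgh : g ≤ᵐ[P] h := by
      filter_upwards [hkae, hns_ae, ae_all_iff.mpr hφ1] with ω h1 h2 h3
      have hφt : Tendsto (fun j => φ j ω) atTop (nhds (g ω)) := by
        rw [Metric.tendsto_atTop]
        intro ε hε
        obtain ⟨R, hR⟩ := (Metric.tendsto_atTop.mp h2) (ε/2) (by linarith)
        refine ⟨R, fun j hj => ?_⟩
        have hb := hφ2 j ω (ε/2) (by linarith) (fun r hrj => by
          have hd := hR r (le_trans hj hrj)
          rw [Real.dist_eq] at hd; linarith)
        rw [Real.dist_eq]; linarith
      exact le_of_tendsto_of_tendsto' hφt h1 (fun j => h3 j)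
    exact ⟨⟨hg, hg0⟩, h, hhKmem, hgh⟩

end
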